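/- Auxiliary-matrix equivalence (Lemma 3 of the paper): Fix F̄ ∈ ℝ^{m×s} and a set 𝒜 ⊆ ℝ^{m×r} with s ≤ r, and γ > 0. Then the infimum over A ∈ 𝒜 and column-orthonormal D_u ∈ ℝ^{r×s} (D_uᵀD_u = I_s) of ‖F̄ − γ A D_u‖_F² equals the infimum over A ∈ 𝒜, orthogonal D̃ ∈ ℝ^{r×r} (with D_u = first s columns of D̃), and arbitrary F_c ∈ ℝ^{m×(r−s)} of ‖(F̄, F_c) − γ A D̃‖_F², where (F̄, F_c) denotes horizontal concatenation. -/

import Mathlib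

open Matrix

/-- Squared Frobenius norm, `‖M‖_F² = Tr(MᵀM)`. -/
def frobSq {m n : Type*} [Fintype m] [Fintype n]
    (M : Matrix m n ℝ) : ℝ := (Mᵀ * M).trace

private lemma frobSq_eq_sum {m n : Type*} [Fintype m] [Fintype n] (M : Matrix m n ℝ) :
    frobSq M = ∑ j, ∑ i, (M i j) ^ 2 := by
  simp [frobSq, Matrix.trace, Matrix.mul_apply, Matrix.diag, sq]

private lemma frobSq_nonneg {m n : Type*} [Fintype m] [Fintype n] (M : Matrix m n ℝ) :
    0 ≤ frobSq M := by
  rw [frobSq_eq_sum]; positivity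

private lemma frobSq_split {m : ℕ} {α β : Type*} [Fintype α] [Fintype β]
    (M : Matrix (Fin m) (α ⊕ β) ℝ) :
    frobSq M = frobSq (M.submatrix id Sum.inl) + frobSq (M.submatrix id Sum.inr) := by
  simp [frobSq_eq_sum, Fintype.sum_sum_type, Matrix.submatrix]

/-- Lemma 3: the hybrid precoding objective over column-orthonormal digital
precoders `D_u` equals the augmented objective over orthogonal `D̃ = (D_u, D_c)`
and an arbitrary auxiliary matrix `F_c` complementing `F̄` to `(F̄, F_c)`. -/
theorem auxiliary_matrix_equivalence (m r s : ℕ) (hrs : s ≤ r)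
    (𝒜 : Set (Matrix (Fin m) (Fin r) ℝ)) (γ : ℝ) (hγ : 0 < γ)
    (F : Matrix (Fin m) (Fin s) ℝ) :
    sInf {x : ℝ | ∃ A ∈ 𝒜, ∃ Du : Matrix (Fin r) (Fin s) ℝ,
        Duᵀ * Du = 1 ∧ x = frobSq (F - γ • (A * Du))} =
    sInf {x : ℝ | ∃ A ∈ 𝒜,
        ∃ Dt : Matrix (Fin r) (Fin s ⊕ Fin (r - s)) ℝ,
        ∃ Fc : Matrix (Fin m) (Fin (r - s)) ℝ,
        Dtᵀ * Dt = 1 ∧ Dt * Dtᵀ = 1 ∧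
        x = frobSq (Matrix.fromCols F Fc - γ • (A * Dt))} := by
  set S₁ := {x : ℝ | ∃ A ∈ 𝒜, ∃ Du : Matrix (Fin r) (Fin s) ℝ,
      Duᵀ * Du = 1 ∧ x = frobSq (F - γ • (A * Du))} with hS₁
  set S₂ := {x : ℝ | ∃ A ∈ 𝒜,
      ∃ Dt : Matrix (Fin r) (Fin s ⊕ Fin (r - s)) ℝ,
      ∃ Fc : Matrix (Fin m) (Fin (r - s)) ℝ,
      Dtᵀ * Dt = 1 ∧ Dt * Dtᵀ = 1 ∧
      x = frobSq (Matrix.fromCols F Fc - γ • (A * Dt))} with hS₂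
  -- every element of S₁ is an element of S₂
  have hsub : S₁ ⊆ S₂ := by
    rintro x ⟨A, hA, Du, hDu, rfl⟩
    -- extend the columns of Du to an orthonormal basis
    let v : Fin s ⊕ Fin (r - s) → EuclideanSpace ℝ (Fin r) :=
      Sum.elim (fun j => WithLp.toLp 2 (fun i => Du i j)) 0
    have hDu' : ∀ j k : Fin s, ∑ i, Du i j * Du i k = if j = k then 1 else 0 := by
      intro j k
      have := congrFun (congrFun hDu j) k
      simpa [Matrix.mul_apply, Matrix.one_apply] using this
    have hv : Orthonormal ℝ ((Set.range (Sum.inl : Fin s → Fin s ⊕ Fin (r - s))).restrict v) := by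
      rw [orthonormal_iff_ite]
      rintro ⟨-, j, rfl⟩ ⟨-, k, rfl⟩
      have : (inner ℝ (v (Sum.inl j)) (v (Sum.inl k)) : ℝ) = ∑ i, Du i j * Du i k := by
        simp [PiLp.inner_apply, v, RCLike.inner_apply, mul_comm]
      show inner ℝ (v (Sum.inl j)) (v (Sum.inl k)) = _
      rw [this, hDu' j k]
      simp [Subtype.ext_iff]
    have hcard : Module.finrank ℝ (EuclideanSpace ℝ (Fin r))
        = Fintype.card (Fin s ⊕ Fin (r - s)) := by
      simp [Nat.add_sub_cancel' hrs]
    obtain ⟨b, hb⟩ := hv.exists_orthonormalBasis_extension_of_card_eq hcard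
    let Dt : Matrix (Fin r) (Fin s ⊕ Fin (r - s)) ℝ := Matrix.of fun i k => b k i
    have hbon := orthonormal_iff_ite.mp b.orthonormal
    have hDt1 : Dtᵀ * Dt = 1 := by
      ext k l
      have : (inner ℝ (b k) (b l) : ℝ) = ∑ i, b k i * b l i := by
        simp [PiLp.inner_apply, RCLike.inner_apply, mul_comm]
      simp only [Matrix.mul_apply, Matrix.transpose_apply, Matrix.one_apply, Dt, Matrix.of_apply]
      rw [← this]
      exact hbon k l
    have e : Fin r ≃ (Fin s ⊕ Fin (r - s)) :=
      (finSumFinEquiv.trans (finCongr (Nat.add_sub_cancel' hrs))).symm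
    have hDt2 : Dt * Dtᵀ = 1 := (Matrix.mul_eq_one_comm_of_equiv e).mpr hDt1
    have hcol : ∀ (i : Fin r) (j : Fin s), Dt i (Sum.inl j) = Du i j := by
      intro i j
      have := hb (Sum.inl j) (Set.mem_range_self j)
      have := congrArg (fun x : EuclideanSpace ℝ (Fin r) => x i) this
      simpa [Dt, v] using this
    refine ⟨A, hA, Dt, γ • (A * Dt.submatrix id Sum.inr), hDt1, hDt2, ?_⟩
    rw [frobSq_split]
    have h1 : (Matrix.fromCols F (γ • (A * Dt.submatrix id Sum.inr))
        - γ • (A * Dt)).submatrix id Sum.inl = F - γ • (A * Du) := by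
      ext i j
      simp [Matrix.fromCols, Matrix.mul_apply, hcol]
    have h2 : (Matrix.fromCols F (γ • (A * Dt.submatrix id Sum.inr))
        - γ • (A * Dt)).submatrix id Sum.inr = 0 := by
      ext i j
      simp [Matrix.fromCols, Matrix.mul_apply]
    rw [h1, h2]
    simp [frobSq_eq_sum]
  -- every element of S₂ dominates an element of S₁
  have hdom : ∀ y ∈ S₂, ∃ x ∈ S₁, x ≤ y := by
    rintro y ⟨A, hA, Dt, Fc, hDt1, hDt2, rfl⟩
    set Du : Matrix (Fin r) (Fin s) ℝ := Dt.submatrix id Sum.inl with hDudef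
    have hDu : Duᵀ * Du = 1 := by
      ext j k
      have := congrFun (congrFun hDt1 (Sum.inl j)) (Sum.inl k)
      simpa [Matrix.mul_apply, Matrix.one_apply, Du] using this
    refine ⟨frobSq (F - γ • (A * Du)), ⟨A, hA, Du, hDu, rfl⟩, ?_⟩
    rw [frobSq_split]
    have h1 : (Matrix.fromCols F Fc - γ • (A * Dt)).submatrix id Sum.inl
        = F - γ • (A * Du) := by
      ext i j
      simp [Matrix.fromCols, Matrix.mul_apply, Du]
    rw [h1]
    nlinarith [frobSq_nonneg ((Matrix.fromCols F Fc - γ • (A * Dt)).submatrix id Sum.inr)]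
  have hbdd₁ : BddBelow S₁ := ⟨0, by rintro x ⟨A, hA, Du, hDu, rfl⟩; exact frobSq_nonneg _⟩
  have hbdd₂ : BddBelow S₂ := ⟨0, by rintro x ⟨A, hA, Dt, Fc, h1, h2, rfl⟩; exact frobSq_nonneg _⟩
  rcases Set.eq_empty_or_nonempty S₂ with h2e | h2ne
  · have h1e : S₁ = ∅ := Set.eq_empty_of_subset_empty (h2e ▸ hsub)
    rw [h1e, h2e]
  · obtain ⟨y, hy⟩ := h2ne
    obtain ⟨x, hx, -⟩ := hdom y hy
    refine le_antisymm ?_ (csInf_le_csInf hbdd₂ ⟨x, hx⟩ hsub)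
    refine le_csInf ⟨y, hy⟩ ?_
    rintro z hz
    obtain ⟨w, hw, hwz⟩ := hdom z hz
    exact (csInf_le hbdd₁ hw).trans hwz
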